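/- Let 0 < r < 1, z₀ ∈ 𝔸_r = {z : r < |z| < 1}, and set p(z) = z ϑ₁'(conj(z₀) z)/ϑ₁(conj(z₀) z) − ϑ₁'(z₀/z)/(z ϑ₁(z₀/z)). Then p satisfies the reflection identity p(1/conj(z)) + conj(p(z)) = 0 for all z in its domain; in particular Re p(z) = 0 whenever |z| = 1. -/

import Mathlib

open Set Complex Topology

/-- The constant `C = ∏_{k=1}^∞ (1 − r^{2k})`. -/
noncomputable def thetaConst (r : ℝ) : ℂ := ∏' k : ℕ, (1 - (r : ℂ) ^ (2 * (k + 1)))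

/-- The annular Jacobi theta function
`ϑ₁(z) = C (1 − 1/z) ∏_{k=1}^∞ (1 − r^{2k} z)(1 − r^{2k}/z)`. -/
noncomputable def theta1 (r : ℝ) (z : ℂ) : ℂ :=
  thetaConst r * (1 - 1 / z) *
    ∏' k : ℕ, ((1 - (r : ℂ) ^ (2 * (k + 1)) * z) * (1 - (r : ℂ) ^ (2 * (k + 1)) / z))

/-- `p(z) = z ϑ₁'(z̄₀ z)/ϑ₁(z̄₀ z) − ϑ₁'(z₀/z)/(z ϑ₁(z₀/z))`. -/
noncomputable def pfun (r : ℝ) (z₀ z : ℂ) : ℂ :=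
  z * deriv (theta1 r) ((starRingEnd ℂ) z₀ * z) / theta1 r ((starRingEnd ℂ) z₀ * z)
    - deriv (theta1 r) (z₀ / z) / (z * theta1 r (z₀ / z))

lemma conj_tprod (f : ℕ → ℂ) :
    (starRingEnd ℂ) (∏' k, f k) = ∏' k, (starRingEnd ℂ) (f k) := by
  by_cases h : Multipliable f
  · exact h.map_tprod (starRingEnd ℂ) continuous_star
  · have h2 : ¬ Multipliable (fun k => (starRingEnd ℂ) (f k)) := by
      intro h2
      have := h2.map (starRingEnd ℂ) continuous_star
      simp only [Function.comp_def, Complex.conj_conj] at this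
      exact h this
    rw [tprod_eq_one_of_not_multipliable h, tprod_eq_one_of_not_multipliable h2, map_one]

lemma theta1_conj (r : ℝ) (z : ℂ) :
    theta1 r ((starRingEnd ℂ) z) = (starRingEnd ℂ) (theta1 r z) := by
  simp only [theta1, thetaConst, map_mul, map_sub, map_one, map_div₀, conj_tprod, map_pow,
    Complex.conj_ofReal]

lemma hasDerivAt_conj_of_conj {f : ℂ → ℂ}
    (hf : ∀ w, f ((starRingEnd ℂ) w) = (starRingEnd ℂ) (f w)) {d z : ℂ}
    (h : HasDerivAt f d z) : HasDerivAt f ((starRingEnd ℂ) d) ((starRingEnd ℂ) z) := by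
  rw [hasDerivAt_iff_tendsto_slope] at h ⊢
  have hmap : (𝓝[≠] ((starRingEnd ℂ) z)) =
      Filter.map (starRingEnd ℂ) (𝓝[≠] z) := by
    have := Complex.conjCLE.toHomeomorph.map_punctured_nhds_eq z
    exact this.symm
  rw [hmap, Filter.tendsto_map'_iff]
  have heq : (slope f ((starRingEnd ℂ) z)) ∘ (starRingEnd ℂ) =
      (starRingEnd ℂ) ∘ slope f z := by
    funext u
    simp only [Function.comp_apply, slope_def_field, hf]
    rw [← map_sub, ← map_sub, div_eq_mul_inv, div_eq_mul_inv, ← map_inv₀, ← map_mul]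
  rw [heq]
  exact (continuous_star.tendsto d).comp h

lemma deriv_theta1_conj (r : ℝ) (z : ℂ) :
    deriv (theta1 r) ((starRingEnd ℂ) z) = (starRingEnd ℂ) (deriv (theta1 r) z) := by
  by_cases h : DifferentiableAt ℂ (theta1 r) z
  · exact (hasDerivAt_conj_of_conj (theta1_conj r) h.hasDerivAt).deriv
  · have h2 : ¬ DifferentiableAt ℂ (theta1 r) ((starRingEnd ℂ) z) := by
      intro h2
      have := (hasDerivAt_conj_of_conj (theta1_conj r) h2.hasDerivAt).differentiableAt
      simp only [Complex.conj_conj] at this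
      exact h this
    rw [deriv_zero_of_not_differentiableAt h, deriv_zero_of_not_differentiableAt h2, map_zero]

theorem stmt13 (r : ℝ) (hr0 : 0 < r) (hr1 : r < 1)
    (z₀ : ℂ) (hz₀l : r < ‖z₀‖) (hz₀u : ‖z₀‖ < 1) :
    (∀ z : ℂ, z ≠ 0 →
      theta1 r ((starRingEnd ℂ) z₀ * z) ≠ 0 → theta1 r (z₀ / z) ≠ 0 →
      theta1 r ((starRingEnd ℂ) z₀ * (1 / (starRingEnd ℂ) z)) ≠ 0 →
      theta1 r (z₀ / (1 / (starRingEnd ℂ) z)) ≠ 0 →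
      pfun r z₀ (1 / (starRingEnd ℂ) z) + (starRingEnd ℂ) (pfun r z₀ z) = 0) ∧
    ∀ z : ℂ, ‖z‖ = 1 →
      theta1 r ((starRingEnd ℂ) z₀ * z) ≠ 0 → theta1 r (z₀ / z) ≠ 0 →
      (pfun r z₀ z).re = 0 := by
  have key : ∀ z : ℂ, z ≠ 0 →
      theta1 r ((starRingEnd ℂ) z₀ * z) ≠ 0 → theta1 r (z₀ / z) ≠ 0 →
      pfun r z₀ (1 / (starRingEnd ℂ) z) + (starRingEnd ℂ) (pfun r z₀ z) = 0 := by
    intro z hz hA hB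
    have hzc : (starRingEnd ℂ) z ≠ 0 := by
      simpa using hz
    have e1 : (starRingEnd ℂ) z₀ * (1 / (starRingEnd ℂ) z) = (starRingEnd ℂ) (z₀ / z) := by
      rw [map_div₀]; ring
    have e2 : z₀ / (1 / (starRingEnd ℂ) z) = (starRingEnd ℂ) ((starRingEnd ℂ) z₀ * z) := by
      rw [map_mul, Complex.conj_conj]
      field_simp
    set A := theta1 r ((starRingEnd ℂ) z₀ * z) with hAdef
    set A' := deriv (theta1 r) ((starRingEnd ℂ) z₀ * z) with hA'def
    set B := theta1 r (z₀ / z) with hBdef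
    set B' := deriv (theta1 r) (z₀ / z) with hB'def
    have hcA : (starRingEnd ℂ) A ≠ 0 := by simpa using hA
    have hcB : (starRingEnd ℂ) B ≠ 0 := by simpa using hB
    rw [pfun, pfun, e1, e2, theta1_conj, theta1_conj, deriv_theta1_conj, deriv_theta1_conj]
    rw [← hAdef, ← hA'def, ← hBdef, ← hB'def]
    rw [map_sub, map_div₀, map_div₀, map_mul, map_mul]
    field_simp
    ring
  constructor
  · intro z hz hA hB _ _
    exact key z hz hA hB
  · intro z hz hA hB
    have hz0 : z ≠ 0 := by
      intro h; rw [h] at hz; simp at hz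
    have hinv : 1 / (starRingEnd ℂ) z = z := by
      rw [eq_comm, eq_div_iff (by simpa using hz0)]
      rw [mul_comm, ← Complex.normSq_eq_conj_mul_self, ← Complex.sq_norm]
      rw [hz]
      norm_num
    have := key z hz0 hA hB
    rw [hinv] at this
    have h2 : (pfun r z₀ z) + (starRingEnd ℂ) (pfun r z₀ z) = 0 := this
    have h3 : (2:ℝ) * (pfun r z₀ z).re = 0 := by
      have hc := Complex.add_conj (pfun r z₀ z)
      rw [h2] at hc
      exact_mod_cast hc.symm
    linarith
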